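/- Let D be a domain and S ⊆ D a multiplicative set not containing 0. Then R(S⁻¹D) = R(D)[S], i.e. the reciprocal complement of the localization S⁻¹D equals the subring of Frac(D) generated by R(D) together with the elements of S. -/

import Mathlib

noncomputable def recip (D : Type*) [CommRing D] [IsDomain D] : Subring (FractionRing D) :=
  Subring.closure {x | ∃ d : D, d ≠ 0 ∧ x = (algebraMap D (FractionRing D) d)⁻¹}

/-- The reciprocal complement, inside a field `F`, of a subring `A` of `F`: the
subring of `F` generated by the inverses of the nonzero elements of `A`. -/
def recipIn {F : Type*} [Field F] (A : Subring F) : Subring F :=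
  Subring.closure {x | ∃ a ∈ A, a ≠ 0 ∧ x = a⁻¹}

/-- Let `S` be a multiplicative subset of `D` with `0 ∉ S`.  Viewing
the localization `S⁻¹D` as the subring of `Frac D` generated by `D` and the inverses of
elements of `S`, we have `R(S⁻¹D) = R(D)[S]`, the subring generated by `R(D)` together
with the (images of the) elements of `S`. -/
theorem stmt_10 (D : Type*) [CommRing D] [IsDomain D] (S : Submonoid D) (h0 : (0 : D) ∉ S) :
    recipIn (Subring.closure
        (Set.range (algebraMap D (FractionRing D)) ∪
          {x | ∃ s ∈ S, x = (algebraMap D (FractionRing D) s)⁻¹})) =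
      Subring.closure
        ((recip D : Set (FractionRing D)) ∪ (algebraMap D (FractionRing D) '' S)) := by
  set φ := algebraMap D (FractionRing D) with hφ
  have hinj : Function.Injective φ := IsFractionRing.injective D (FractionRing D)
  have hφne : ∀ s ∈ S, φ s ≠ 0 := by
    intro s hs h
    have hs0 : s = 0 := hinj (by simpa using h)
    exact h0 (hs0 ▸ hs)
  set A := Subring.closure
      (Set.range φ ∪ {x | ∃ s ∈ S, x = (φ s)⁻¹}) with hA
  -- representation lemma
  have rep : ∀ x ∈ A, ∃ d : D, ∃ s ∈ S, x = φ d * (φ s)⁻¹ := by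
    intro x hx
    induction hx using Subring.closure_induction with
    | mem x hx =>
      rcases hx with ⟨d, rfl⟩ | ⟨s, hs, rfl⟩
      · exact ⟨d, 1, S.one_mem, by simp⟩
      · exact ⟨1, s, hs, by simp⟩
    | zero => exact ⟨0, 1, S.one_mem, by simp⟩
    | one => exact ⟨1, 1, S.one_mem, by simp⟩
    | add x y hx hy ihx ihy =>
      obtain ⟨d₁, s₁, hs₁, rfl⟩ := ihx
      obtain ⟨d₂, s₂, hs₂, rfl⟩ := ihy
      refine ⟨d₁ * s₂ + d₂ * s₁, s₁ * s₂, S.mul_mem hs₁ hs₂, ?_⟩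
      have h1 := hφne s₁ hs₁
      have h2 := hφne s₂ hs₂
      field_simp
      simp only [map_add, map_mul]
      ring
    | neg x hx ihx =>
      obtain ⟨d, s, hs, rfl⟩ := ihx
      exact ⟨-d, s, hs, by simp⟩
    | mul x y hx hy ihx ihy =>
      obtain ⟨d₁, s₁, hs₁, rfl⟩ := ihx
      obtain ⟨d₂, s₂, hs₂, rfl⟩ := ihy
      refine ⟨d₁ * d₂, s₁ * s₂, S.mul_mem hs₁ hs₂, ?_⟩
      have h1 := hφne s₁ hs₁
      have h2 := hφne s₂ hs₂
      field_simp
      simp only [map_add, map_mul]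
      ring
  apply le_antisymm
  · rw [recipIn]
    apply Subring.closure_le.mpr
    rintro x ⟨a, ha, hne, rfl⟩
    obtain ⟨d, s, hs, rfl⟩ := rep a ha
    have hd : φ d ≠ 0 := left_ne_zero_of_mul hne
    have hdD : d ≠ 0 := fun h => hd (by simp [h])
    have hsne := hφne s hs
    rw [mul_inv, inv_inv]
    refine Subring.mul_mem _ ?_ ?_
    · exact Subring.subset_closure (Or.inl (Subring.subset_closure ⟨d, hdD, rfl⟩))
    · exact Subring.subset_closure (Or.inr ⟨s, hs, rfl⟩)
  · apply Subring.closure_le.mpr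
    rintro x (hx | ⟨s, hs, rfl⟩)
    · -- x ∈ recip D
      have : recip D ≤ recipIn A := by
        rw [recip, recipIn]
        apply Subring.closure_le.mpr
        rintro y ⟨d, hd, rfl⟩
        refine Subring.subset_closure ⟨φ d, ?_, ?_, rfl⟩
        · exact Subring.subset_closure (Or.inl ⟨d, rfl⟩)
        · simpa using fun h => hd (hinj (by simpa using h))
      exact this hx
    · -- φ s
      have hsne := hφne s hs
      have : φ s = ((φ s)⁻¹)⁻¹ := (inv_inv _).symm
      rw [this, recipIn]
      refine Subring.subset_closure ⟨(φ s)⁻¹, ?_, inv_ne_zero hsne, rfl⟩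
      exact Subring.subset_closure (Or.inr ⟨s, hs, rfl⟩)
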